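/- Let a, x ∈ ℝ with x < a. Then ∫₀^∞ (1/(πt)) · [ ∫₀^t ((a−x)/(√(2π)·s·√(t−s))) · e^{−(a−x)²/(2s)} ds ] dt = 1. (That is, in the driftless case b = 0, the density f_{τ₂}(t) = (1/(πt)) ∫₀^t (|a−x|/(√(2π) s √(t−s))) e^{−(a−x)²/(2s)} ds of the second passage time of Brownian motion through the level a is non-defective.) -/

import Mathlib

open Real MeasureTheory Set Filter

/-- Standard Gaussian density φ(z) = (1/√(2π)) e^{−z²/2}. -/
noncomputable def gaussPdf (z : ℝ) : ℝ := (1 / Real.sqrt (2 * π)) * Real.exp (-z ^ 2 / 2)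

/-- Standard Gaussian distribution function Φ(y) = ∫_{−∞}^y φ(z) dz. -/
noncomputable def gaussCdf (y : ℝ) : ℝ := ∫ z in Set.Iio y, gaussPdf z

/-- ψ_t(u) = (e^{−b²u/2}/(π√(u(t−u)))) · [ e^{−b²(t−u)/2}
      + (b/2)·√(2π(t−u)) · (2Φ(b√(t−u)) − 1) ]. -/
noncomputable def psi (b t u : ℝ) : ℝ :=
  (Real.exp (-b ^ 2 * u / 2) / (π * Real.sqrt (u * (t - u)))) *
    (Real.exp (-b ^ 2 * (t - u) / 2) +
      (b / 2) * Real.sqrt (2 * π * (t - u)) *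
        (2 * gaussCdf (b * Real.sqrt (t - u)) - 1))

/-- Inverse Gaussian first-passage density f_{τ₁}(t) = (|a−x|/t^{3/2}) φ((a+bt−x)/√t). -/
noncomputable def invGaussPdf (a x b t : ℝ) : ℝ :=
  (|a - x| / t ^ ((3 : ℝ) / 2)) * gaussPdf ((a + b * t - x) / Real.sqrt t)

section SecondPassageAux
open Topology

lemma sqrt_tendsto_atTop : Tendsto Real.sqrt atTop atTop := by
  refine tendsto_atTop.2 fun b => ?_
  filter_upwards [eventually_ge_atTop ((max b 0) ^ 2)] with t ht
  calc b ≤ max b 0 := le_max_left _ _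
    _ = Real.sqrt ((max b 0) ^ 2) := (Real.sqrt_sq (le_max_right _ _)).symm
    _ ≤ Real.sqrt t := Real.sqrt_le_sqrt ht

lemma aux1 {s : ℝ} (hs : 0 < s) :
    IntegrableOn (fun t => 1 / (t * Real.sqrt (t - s))) (Ioi s) ∧
      ∫ t in Ioi s, 1 / (t * Real.sqrt (t - s)) = π / Real.sqrt s := by
  have hss : Real.sqrt s ≠ 0 := (Real.sqrt_pos.2 hs).ne'
  set F : ℝ → ℝ := fun t => (2 / Real.sqrt s) * Real.arctan (Real.sqrt (t - s) / Real.sqrt s)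
    with hF
  have hcont : ContinuousWithinAt F (Ici s) s := by
    apply Continuous.continuousWithinAt
    exact continuous_const.mul (Real.continuous_arctan.comp
      ((Real.continuous_sqrt.comp (continuous_id.sub continuous_const)).div_const _))
  have hderiv : ∀ t ∈ Ioi s, HasDerivAt F (1 / (t * Real.sqrt (t - s))) t := by
    intro t ht
    have hts : 0 < t - s := sub_pos.2 ht
    have ht0 : 0 < t := hs.trans ht
    have h1 : HasDerivAt (fun t : ℝ => t - s) 1 t := (hasDerivAt_id t).sub_const s
    have h2 : HasDerivAt (fun t : ℝ => Real.sqrt (t - s)) (1 / (2 * Real.sqrt (t - s))) t := by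
      have := (Real.hasDerivAt_sqrt hts.ne').comp t h1
      rw [mul_one] at this
      exact this
    have h3 : HasDerivAt (fun t : ℝ => Real.sqrt (t - s) / Real.sqrt s)
        ((1 / (2 * Real.sqrt (t - s))) / Real.sqrt s) t := h2.div_const _
    have h4 := (Real.hasDerivAt_arctan (Real.sqrt (t - s) / Real.sqrt s)).comp t h3
    have h5 := h4.const_mul (2 / Real.sqrt s)
    refine h5.congr_deriv ?_
    symm
    have hts' : Real.sqrt (t - s) ≠ 0 := (Real.sqrt_pos.2 hts).ne'
    have e3 : 1 + (Real.sqrt (t - s) / Real.sqrt s) ^ 2 = t / s := by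
      rw [div_pow, Real.sq_sqrt hts.le, Real.sq_sqrt hs.le]; field_simp; ring
    rw [e3]
    have e4 : Real.sqrt s * Real.sqrt s = s := Real.mul_self_sqrt hs.le
    field_simp
    linear_combination e4
  have hpos : ∀ t ∈ Ioi s, 0 ≤ 1 / (t * Real.sqrt (t - s)) := by
    intro t ht
    have ht0 : 0 < t := hs.trans ht
    positivity
  have hlim : Tendsto F atTop (𝓝 ((2 / Real.sqrt s) * (π / 2))) := by
    apply Tendsto.const_mul
    have hinner : Tendsto (fun t : ℝ => Real.sqrt (t - s) / Real.sqrt s) atTop atTop := by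
      apply Tendsto.atTop_div_const (Real.sqrt_pos.2 hs)
      exact sqrt_tendsto_atTop.comp (tendsto_atTop_add_const_right _ _ tendsto_id)
    exact (Real.tendsto_arctan_atTop.mono_right nhdsWithin_le_nhds).comp hinner
  have hFs : F s = 0 := by simp [hF]
  refine ⟨integrableOn_Ioi_deriv_of_nonneg hcont hderiv hpos hlim, ?_⟩
  rw [integral_Ioi_of_hasDerivAt_of_nonneg hcont hderiv hpos hlim, hFs, sub_zero]
  field_simp

lemma key24 : Real.sqrt (2 / π) = 2 / Real.sqrt (2 * π) := by
  rw [eq_div_iff (Real.sqrt_pos.2 (by positivity)).ne', ← Real.sqrt_mul (by positivity)]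
  rw [show (2 / π) * (2 * π) = 2 ^ 2 by field_simp, Real.sqrt_sq (by norm_num)]

lemma aux2 {c : ℝ} (hc : 0 < c) :
    IntegrableOn
      (fun s => c * Real.exp (-c ^ 2 / (2 * s)) / (Real.sqrt (2 * π) * (s * Real.sqrt s)))
      (Ioi 0) ∧
    ∫ s in Ioi (0:ℝ),
      c * Real.exp (-c ^ 2 / (2 * s)) / (Real.sqrt (2 * π) * (s * Real.sqrt s)) = 1 := by
  set A : ℝ → ℝ := fun y => ∫ u in (0:ℝ)..y, Real.exp (-(1/2 : ℝ) * u ^ 2) with hA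
  have hcontexp : Continuous fun u : ℝ => Real.exp (-(1/2 : ℝ) * u ^ 2) := by continuity
  have hAderiv : ∀ y : ℝ, HasDerivAt A (Real.exp (-(1/2 : ℝ) * y ^ 2)) y := by
    intro y
    exact intervalIntegral.integral_hasDerivAt_right (hcontexp.intervalIntegrable _ _)
      (hcontexp.stronglyMeasurableAtFilter _ _) hcontexp.continuousAt
  have hAcont : Continuous A := by
    refine continuous_iff_continuousAt.2 fun y => ((hAderiv y).differentiableAt).continuousAt
  have hAlim : Tendsto A atTop (𝓝 (Real.sqrt (2 * π) / 2)) := by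
    have := intervalIntegral_tendsto_integral_Ioi (0:ℝ)
      ((integrable_exp_neg_mul_sq (by norm_num : (0:ℝ) < 1/2)).integrableOn) tendsto_id
    have hval : ∫ u in Ioi (0:ℝ), Real.exp (-(1/2 : ℝ) * u ^ 2) = Real.sqrt (2 * π) / 2 := by
      rw [integral_gaussian_Ioi]
      rw [show π / (1/2 : ℝ) = 2 * π by ring]
    rw [hval] at this
    exact this
  set G : ℝ → ℝ := fun s =>
    if s ≤ 0 then (-1 : ℝ) else -(Real.sqrt (2 / π)) * A (c / Real.sqrt s) with hG
  have hGval : ∀ s : ℝ, 0 < s → G s = -(Real.sqrt (2 / π)) * A (c / Real.sqrt s) := by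
    intro s hs; simp [hG, not_le.2 hs]
  have hderiv : ∀ s ∈ Ioi (0:ℝ), HasDerivAt G
      (c * Real.exp (-c ^ 2 / (2 * s)) / (Real.sqrt (2 * π) * (s * Real.sqrt s))) s := by
    intro s hs
    have hs' : 0 < s := hs
    have hss : Real.sqrt s ≠ 0 := (Real.sqrt_pos.2 hs').ne'
    have h2 : HasDerivAt Real.sqrt (1 / (2 * Real.sqrt s)) s := Real.hasDerivAt_sqrt hs'.ne'
    have h3 : HasDerivAt (fun s : ℝ => (Real.sqrt s)⁻¹)
        (-(1 / (2 * Real.sqrt s)) / (Real.sqrt s) ^ 2) s := h2.inv hss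
    have h4 : HasDerivAt (fun s : ℝ => c / Real.sqrt s)
        (c * (-(1 / (2 * Real.sqrt s)) / (Real.sqrt s) ^ 2)) s := by
      simpa [div_eq_mul_inv] using h3.const_mul c
    have h5 := ((hAderiv (c / Real.sqrt s)).comp s h4).const_mul (-(Real.sqrt (2 / π)))
    refine (h5.congr_of_eventuallyEq ?_).congr_deriv ?_
    · filter_upwards [Ioi_mem_nhds hs'] with u hu
      simp [hG, not_le.2 (show (0:ℝ) < u from hu)]
    · have e1 : (c / Real.sqrt s) ^ 2 = c ^ 2 / s := by
        rw [div_pow, Real.sq_sqrt hs'.le]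
      have e2 : -(1/2 : ℝ) * (c ^ 2 / s) = -c ^ 2 / (2 * s) := by ring
      have e4 : Real.sqrt s * Real.sqrt s = s := Real.mul_self_sqrt hs'.le
      rw [e1, e2, key24, Real.sq_sqrt hs'.le]
      have h2π : Real.sqrt (2 * π) ≠ 0 := (Real.sqrt_pos.2 (by positivity)).ne'
      field_simp
  have hpos : ∀ s ∈ Ioi (0:ℝ),
      0 ≤ c * Real.exp (-c ^ 2 / (2 * s)) / (Real.sqrt (2 * π) * (s * Real.sqrt s)) := by
    intro s hs
    have hs' : 0 < s := hs
    positivity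
  have hlim : Tendsto G atTop (𝓝 0) := by
    have h1 : Tendsto (fun s : ℝ => c / Real.sqrt s) atTop (𝓝 0) := by
      apply Tendsto.div_atTop tendsto_const_nhds sqrt_tendsto_atTop
    have h2 : Tendsto (fun s : ℝ => -(Real.sqrt (2 / π)) * A (c / Real.sqrt s)) atTop
        (𝓝 (-(Real.sqrt (2 / π)) * A 0)) :=
      ((hAcont.tendsto 0).comp h1).const_mul _
    have hA0 : A 0 = 0 := by simp [hA]
    rw [hA0, mul_zero] at h2
    refine h2.congr' ?_
    filter_upwards [eventually_gt_atTop (0:ℝ)] with s hs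
    exact (hGval s hs).symm
  have hGcont : ContinuousWithinAt G (Ici 0) 0 := by
    have hG0 : G 0 = -1 := by simp [hG]
    unfold ContinuousWithinAt
    rw [hG0, show (Ici (0:ℝ)) = {0} ∪ Ioi 0 by
      ext y; simp [le_iff_lt_or_eq, mem_Ici, mem_Ioi, or_comm, eq_comm]]
    rw [nhdsWithin_union, nhdsWithin_singleton]
    refine Tendsto.sup ?_ ?_
    · have := tendsto_pure_nhds G 0
      rwa [hG0] at this
    · have h1 : Tendsto (fun s : ℝ => c / Real.sqrt s) (𝓝[>] 0) atTop := by
        have hsq : Tendsto (fun s : ℝ => Real.sqrt s) (𝓝[>] 0) (𝓝[>] 0) := by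
          apply tendsto_nhdsWithin_of_tendsto_nhds_of_eventually_within
          · simpa using (Real.continuous_sqrt.tendsto 0).mono_left nhdsWithin_le_nhds
          · filter_upwards [self_mem_nhdsWithin] with s hs
            exact Real.sqrt_pos.2 hs
        have := tendsto_inv_nhdsGT_zero.comp hsq
        exact Tendsto.const_mul_atTop hc this |>.congr fun s => by
          simp [div_eq_mul_inv, Function.comp]
      have h2 : Tendsto (fun s : ℝ => -(Real.sqrt (2 / π)) * A (c / Real.sqrt s)) (𝓝[>] 0)
          (𝓝 (-(Real.sqrt (2 / π)) * (Real.sqrt (2 * π) / 2))) :=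
        (hAlim.comp h1).const_mul _
      have hval : -(Real.sqrt (2 / π)) * (Real.sqrt (2 * π) / 2) = -1 := by
        rw [key24]
        have h2π : Real.sqrt (2 * π) ≠ 0 := (Real.sqrt_pos.2 (by positivity)).ne'
        field_simp
      rw [hval] at h2
      refine h2.congr' ?_
      filter_upwards [self_mem_nhdsWithin] with s hs
      exact (hGval s hs).symm
  have hG0 : G 0 = -1 := by simp [hG]
  refine ⟨integrableOn_Ioi_deriv_of_nonneg hGcont hderiv hpos hlim, ?_⟩
  rw [integral_Ioi_of_hasDerivAt_of_nonneg hGcont hderiv hpos hlim, hG0]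
  norm_num

end SecondPassageAux

open Topology in
theorem stmt12 (a x : ℝ) (h : x < a) :
    ∫ t in Set.Ioi (0 : ℝ), (1 / (π * t)) *
        ∫ s in (0 : ℝ)..t, ((a - x) / (Real.sqrt (2 * π) * s * Real.sqrt (t - s))) *
          Real.exp (-(a - x) ^ 2 / (2 * s)) = 1 := by
  have hc : 0 < a - x := sub_pos.2 h
  have hπ : (0:ℝ) < π := Real.pi_pos
  set c := a - x with hcdef
  set g : ℝ → ℝ → ℝ := fun t s =>
    c / (Real.sqrt (2 * π) * s * Real.sqrt (t - s)) * Real.exp (-c ^ 2 / (2 * s)) with hgdef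
  set q : ℝ → ℝ → ℝ := fun s t => 1 / (π * t) * g t s with hqdef
  -- measurability
  have hgm : Measurable (fun p : ℝ × ℝ => g p.1 p.2) := by
    apply Measurable.mul
    · exact (measurable_const.div
        ((measurable_const.mul measurable_snd).mul (measurable_fst.sub measurable_snd).sqrt))
    · exact (measurable_const.div (measurable_const.mul measurable_snd)).exp
  have hgm1 : ∀ t : ℝ, Measurable (fun s => g t s) :=
    fun t => hgm.comp (measurable_const.prodMk measurable_id)
  have hqm : Measurable (fun p : ℝ × ℝ => q p.2 p.1) := by
    exact (measurable_const.div (measurable_const.mul measurable_fst)).mul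
      (hgm.comp (measurable_fst.prodMk measurable_snd))
  have hqm1 : ∀ s : ℝ, Measurable (fun t => q s t) :=
    fun s => hqm.comp (measurable_id.prodMk measurable_const)
  -- inner t-integral for fixed s
  have inner_t : ∀ s ∈ Ioi (0:ℝ), (∫⁻ t in Ioi s, ENNReal.ofReal (q s t)) =
      ENNReal.ofReal (c * Real.exp (-c ^ 2 / (2 * s)) /
        (Real.sqrt (2 * π) * (s * Real.sqrt s))) := by
    intro s hs
    have hs' : (0:ℝ) < s := hs
    set C : ℝ := c * Real.exp (-c ^ 2 / (2 * s)) / (π * (Real.sqrt (2 * π) * s)) with hC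
    have hC0 : 0 ≤ C := by positivity
    have hqC : ∀ t, q s t = C * (1 / (t * Real.sqrt (t - s))) := by
      intro t; simp only [hqdef, hgdef, hC]; ring
    have hm : Measurable fun t => ENNReal.ofReal (1 / (t * Real.sqrt (t - s))) :=
      (measurable_const.div (measurable_id.mul (measurable_id.sub measurable_const).sqrt)).ennreal_ofReal
    have hnn : 0 ≤ᵐ[volume.restrict (Ioi s)] fun t => 1 / (t * Real.sqrt (t - s)) := by
      refine (ae_restrict_iff' measurableSet_Ioi).2 (ae_of_all _ fun t ht => ?_)
      have ht' : 0 < t := hs'.trans ht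
      positivity
    calc (∫⁻ t in Ioi s, ENNReal.ofReal (q s t))
        = ∫⁻ t in Ioi s, ENNReal.ofReal C * ENNReal.ofReal (1 / (t * Real.sqrt (t - s))) := by
          simp_rw [hqC, ENNReal.ofReal_mul hC0]
      _ = ENNReal.ofReal C * ∫⁻ t in Ioi s, ENNReal.ofReal (1 / (t * Real.sqrt (t - s))) :=
          lintegral_const_mul _ hm
      _ = ENNReal.ofReal C * ENNReal.ofReal (π / Real.sqrt s) := by
          rw [← ofReal_integral_eq_lintegral_ofReal (aux1 hs').1 hnn, (aux1 hs').2]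
      _ = ENNReal.ofReal (C * (π / Real.sqrt s)) := (ENNReal.ofReal_mul hC0).symm
      _ = ENNReal.ofReal (c * Real.exp (-c ^ 2 / (2 * s)) /
            (Real.sqrt (2 * π) * (s * Real.sqrt s))) := by
          congr 1
          rw [hC]
          field_simp
  -- the double lintegral equals 1
  have claim1 : ∀ t : ℝ, (∫⁻ s in Ioo 0 t, ENNReal.ofReal (q s t)) =
      ∫⁻ s in Ioi 0, (Iio t).indicator (fun s => ENNReal.ofReal (q s t)) s := by
    intro t
    rw [lintegral_indicator measurableSet_Iio,
      Measure.restrict_restrict measurableSet_Iio, Set.Iio_inter_Ioi]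
  have hR : (∫⁻ t in Ioi (0:ℝ), ∫⁻ s in Ioo 0 t, ENNReal.ofReal (q s t)) = 1 := by
    have hswapm : AEMeasurable
        (Function.uncurry fun t s => (Iio t).indicator (fun s => ENNReal.ofReal (q s t)) s)
        ((volume.restrict (Ioi (0:ℝ))).prod (volume.restrict (Ioi (0:ℝ)))) := by
      have : (Function.uncurry fun t s => (Iio t).indicator (fun s => ENNReal.ofReal (q s t)) s)
          = fun p : ℝ × ℝ => if p.2 < p.1 then ENNReal.ofReal (q p.2 p.1) else 0 := by
        funext p; simp [Function.uncurry, Set.indicator_apply]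
      rw [this]
      exact (Measurable.ite (measurableSet_lt measurable_snd measurable_fst)
        hqm.ennreal_ofReal measurable_const).aemeasurable
    calc (∫⁻ t in Ioi (0:ℝ), ∫⁻ s in Ioo 0 t, ENNReal.ofReal (q s t))
        = ∫⁻ t in Ioi (0:ℝ), ∫⁻ s in Ioi 0,
            (Iio t).indicator (fun s => ENNReal.ofReal (q s t)) s := lintegral_congr claim1
      _ = ∫⁻ s in Ioi (0:ℝ), ∫⁻ t in Ioi 0,
            (Iio t).indicator (fun s' => ENNReal.ofReal (q s' t)) s := by
          exact lintegral_lintegral_swap hswapm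
      _ = ∫⁻ s in Ioi (0:ℝ), ENNReal.ofReal (c * Real.exp (-c ^ 2 / (2 * s)) /
            (Real.sqrt (2 * π) * (s * Real.sqrt s))) := by
          refine setLIntegral_congr_fun measurableSet_Ioi (fun s hs => ?_)
          have e : ∀ t : ℝ, (Iio t).indicator (fun s' => ENNReal.ofReal (q s' t)) s
              = (Ioi s).indicator (fun t => ENNReal.ofReal (q s t)) t := by
            intro t; simp [Set.indicator_apply, mem_Iio, mem_Ioi]
          simp_rw [e]
          rw [lintegral_indicator measurableSet_Ioi,
            Measure.restrict_restrict measurableSet_Ioi,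
            Set.inter_eq_self_of_subset_left (Ioi_subset_Ioi (le_of_lt hs))]
          exact inner_t s hs
      _ = 1 := by
          rw [← ofReal_integral_eq_lintegral_ofReal (aux2 hc).1 ?_, (aux2 hc).2, ENNReal.ofReal_one]
          refine (ae_restrict_iff' measurableSet_Ioi).2 (ae_of_all _ fun s hs => ?_)
          have hs' : (0:ℝ) < s := hs
          positivity
  -- measurability of the outer integrand
  have hker : Measurable (fun p : ℝ × ℝ => (Ioc 0 p.1).indicator (g p.1) p.2) := by
    have e : (fun p : ℝ × ℝ => (Ioc 0 p.1).indicator (g p.1) p.2)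
        = fun p : ℝ × ℝ => if 0 < p.2 ∧ p.2 ≤ p.1 then g p.1 p.2 else 0 := by
      funext p; simp [Set.indicator_apply, mem_Ioc]
    rw [e]
    exact Measurable.ite
      ((measurableSet_lt measurable_const measurable_snd).inter
        (measurableSet_le measurable_snd measurable_fst)) hgm measurable_const
  have hsm : AEStronglyMeasurable (fun t => 1 / (π * t) * ∫ s in (0:ℝ)..t, g t s)
      (volume.restrict (Ioi 0)) := by
    have hm0 : StronglyMeasurable (fun t : ℝ => ∫ s, (Ioc 0 t).indicator (g t) s) :=
      hker.stronglyMeasurable.integral_prod_right'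
    have hm1 : AEStronglyMeasurable
        (fun t : ℝ => 1 / (π * t) * ∫ s, (Ioc 0 t).indicator (g t) s)
        (volume.restrict (Ioi 0)) :=
      ((measurable_const.div (measurable_const.mul measurable_id)).mul
        hm0.measurable).aestronglyMeasurable
    refine hm1.congr ?_
    refine (ae_restrict_iff' measurableSet_Ioi).2 (ae_of_all _ fun t ht => ?_)
    have ht' : (0:ℝ) < t := ht
    dsimp only
    rw [integral_indicator measurableSet_Ioc, ← intervalIntegral.integral_of_le ht'.le]
  have hnonneg : 0 ≤ᵐ[volume.restrict (Ioi (0:ℝ))]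
      fun t => 1 / (π * t) * ∫ s in (0:ℝ)..t, g t s := by
    refine (ae_restrict_iff' measurableSet_Ioi).2 (ae_of_all _ fun t ht => ?_)
    have ht' : (0:ℝ) < t := ht
    refine mul_nonneg (by positivity) (intervalIntegral.integral_nonneg ht'.le fun u hu => ?_)
    refine mul_nonneg (div_nonneg hc.le ?_) (Real.exp_pos _).le
    exact mul_nonneg (mul_nonneg (Real.sqrt_nonneg _) hu.1) (Real.sqrt_nonneg _)
  rw [integral_eq_lintegral_of_nonneg_ae hnonneg hsm]
  have hinmeas : Measurable fun t : ℝ => ∫⁻ s in Ioo 0 t, ENNReal.ofReal (q s t) := by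
    have e : (fun t : ℝ => ∫⁻ s in Ioo 0 t, ENNReal.ofReal (q s t))
        = fun t : ℝ => ∫⁻ s in Ioi 0, (fun p : ℝ × ℝ =>
            if p.2 < p.1 then ENNReal.ofReal (q p.2 p.1) else 0) (t, s) := by
      funext t
      rw [claim1 t]
      exact lintegral_congr fun s => by simp [Set.indicator_apply]
    rw [e]
    exact Measurable.lintegral_prod_right'
      (Measurable.ite (measurableSet_lt measurable_snd measurable_fst)
        hqm.ennreal_ofReal measurable_const)
  have hfin : ∀ᵐ t ∂(volume.restrict (Ioi (0:ℝ))),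
      (∫⁻ s in Ioo 0 t, ENNReal.ofReal (q s t)) < ⊤ :=
    ae_lt_top hinmeas (by rw [hR]; exact ENNReal.one_ne_top)
  have hptw : ∀ᵐ t ∂(volume.restrict (Ioi (0:ℝ))),
      ENNReal.ofReal (1 / (π * t) * ∫ s in (0:ℝ)..t, g t s)
        = ∫⁻ s in Ioo 0 t, ENNReal.ofReal (q s t) := by
    filter_upwards [hfin, ae_restrict_mem measurableSet_Ioi] with t hfint ht
    have ht' : (0:ℝ) < t := ht
    have hmg : Measurable fun s => ENNReal.ofReal (g t s) := (hgm1 t).ennreal_ofReal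
    have e0 : ∀ s, ENNReal.ofReal (q s t)
        = ENNReal.ofReal (1 / (π * t)) * ENNReal.ofReal (g t s) := by
      intro s
      rw [← ENNReal.ofReal_mul (by positivity)]
    have e1 : (∫⁻ s in Ioo 0 t, ENNReal.ofReal (q s t))
        = ENNReal.ofReal (1 / (π * t)) * ∫⁻ s in Ioo 0 t, ENNReal.ofReal (g t s) := by
      simp_rw [e0]
      exact lintegral_const_mul _ hmg
    have hLgfin : (∫⁻ s in Ioo 0 t, ENNReal.ofReal (g t s)) ≠ ⊤ := by
      intro hcon
      rw [e1, hcon, ENNReal.mul_top (by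
        simp only [ne_eq, ENNReal.ofReal_eq_zero, not_le]
        positivity)] at hfint
      exact (lt_irrefl _ hfint)
    have hg_nonneg : 0 ≤ᵐ[volume.restrict (Ioo (0:ℝ) t)] fun s => g t s := by
      refine (ae_restrict_iff' measurableSet_Ioo).2 (ae_of_all _ fun s hs => ?_)
      have hs1 : 0 < s := hs.1
      have hs2 : 0 ≤ t - s := (sub_nonneg.2 hs.2.le)
      refine mul_nonneg (div_nonneg hc.le ?_) (Real.exp_pos _).le
      exact mul_nonneg (mul_nonneg (Real.sqrt_nonneg _) hs1.le) (Real.sqrt_nonneg _)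
    have e2 : ∫ s in (0:ℝ)..t, g t s
        = (∫⁻ s in Ioo 0 t, ENNReal.ofReal (g t s)).toReal := by
      rw [intervalIntegral.integral_of_le ht'.le, integral_Ioc_eq_integral_Ioo,
        integral_eq_lintegral_of_nonneg_ae hg_nonneg (hgm1 t).aestronglyMeasurable]
    rw [e2, e1, ENNReal.ofReal_mul (by positivity), ENNReal.ofReal_toReal hLgfin]
  rw [lintegral_congr_ae hptw, hR, ENNReal.toReal_one]
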